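/- arXiv:2102.10331 — 2 statements merged into one kernel-verified Lean document; each statement's English description precedes it below -/
import Mathlib

section
/- For τ > 0 and any matrix Q, the singular value thresholding operator D_τ(Q) = U (Σ - τI)_+ V^T (where Q = UΣV^T is the SVD and (·)_+ denotes the positive part applied to singular values) is the unique minimizer of the function L ↦ τ‖L‖_* + (1/2)‖L - Q‖_F², where ‖·‖_* is the nuclear norm and ‖·‖_F the Frobenius norm. -/
open Matrix BigOperators

noncomputable def singVal {m n : ℕ} (M : Matrix (Fin m) (Fin n) ℝ) (i : Fin n) : ℝ :=
  Real.sqrt ((show (Mᵀ * M).IsHermitian by simpa using Matrix.isHermitian_conjTranspose_mul_self M).eigenvalues i)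

noncomputable def nuclearNorm {m n : ℕ} (M : Matrix (Fin m) (Fin n) ℝ) : ℝ :=
  ∑ i, singVal M i

noncomputable def frobNorm {m n : ℕ} (M : Matrix (Fin m) (Fin n) ℝ) : ℝ :=
  Real.sqrt (Matrix.trace (Mᵀ * M))

noncomputable def finner {m n : ℕ} (A B : Matrix (Fin m) (Fin n) ℝ) : ℝ :=
  Matrix.trace (Aᵀ * B)

noncomputable def opNorm {m n : ℕ} (M : Matrix (Fin m) (Fin n) ℝ) : ℝ :=
  ‖LinearMap.toContinuousLinearMap (Matrix.toEuclideanLin M)‖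

lemma trace_transpose_mul_eq {a b : ℕ} (X Y : Matrix (Fin a) (Fin b) ℝ) :
    Matrix.trace (Xᵀ * Y) = ∑ i, ∑ j, X j i * Y j i := by
  simp [Matrix.trace, Matrix.diag, Matrix.mul_apply]

lemma mul_self_diag {a b : ℕ} (X : Matrix (Fin a) (Fin b) ℝ) (i : Fin b) :
    (Xᵀ * X) i i = ∑ j, X j i ^ 2 := by
  simp [Matrix.mul_apply, sq]

lemma trace_tmul_nonneg {a b : ℕ} (X : Matrix (Fin a) (Fin b) ℝ) :
    0 ≤ Matrix.trace (Xᵀ * X) := by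
  rw [trace_transpose_mul_eq]
  apply Finset.sum_nonneg; intro i _
  apply Finset.sum_nonneg; intro j _
  exact mul_self_nonneg _

lemma frob_sq {a b : ℕ} (X : Matrix (Fin a) (Fin b) ℝ) :
    (frobNorm X)^2 = Matrix.trace (Xᵀ * X) := by
  rw [frobNorm, Real.sq_sqrt (trace_tmul_nonneg X)]

lemma trace_transpose_mul_comm {a b : ℕ} (X Y : Matrix (Fin a) (Fin b) ℝ) :
    Matrix.trace (Xᵀ * Y) = Matrix.trace (Yᵀ * X) := by
  rw [← Matrix.trace_transpose (Xᵀ * Y), Matrix.transpose_mul, Matrix.transpose_transpose]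

-- conjTranspose = transpose over ℝ
example {a b : ℕ} (X : Matrix (Fin a) (Fin b) ℝ) : Xᴴ = Xᵀ :=
  Matrix.conjTranspose_eq_transpose_of_trivial X

-- PSD of MᵀM over ℝ
lemma psd_tmul {a b : ℕ} (X : Matrix (Fin a) (Fin b) ℝ) : (Xᵀ * X).PosSemidef := by
  rw [← Matrix.conjTranspose_eq_transpose_of_trivial]
  exact Matrix.posSemidef_conjTranspose_mul_self X

lemma trace_conj_unitary {k : ℕ} (W : Matrix.unitaryGroup (Fin k) ℝ) (A : Matrix (Fin k) (Fin k) ℝ) :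
    Matrix.trace ((W : Matrix (Fin k) (Fin k) ℝ) * A * star (W : Matrix (Fin k) (Fin k) ℝ)) = Matrix.trace A := by
  rw [Matrix.trace_mul_cycle]
  rw [show (star (W : Matrix (Fin k) (Fin k) ℝ)) * (W : Matrix (Fin k) (Fin k) ℝ) = 1 from W.2.1, one_mul]

open scoped MatrixOrder in
lemma nuclearNorm_eq_trace_sqrt {a b : ℕ} (M : Matrix (Fin a) (Fin b) ℝ) :
    nuclearNorm M = Matrix.trace (CFC.sqrt (Mᵀ * M)) := by
  rw [CFC.sqrt_eq_cfc, cfc_nnreal_eq_real _ _ (psd_tmul M).nonneg, (psd_tmul M).1.cfc_eq,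
    IsHermitian.cfc, Unitary.conjStarAlgAut_apply, trace_conj_unitary]
  rw [Matrix.trace_diagonal]
  unfold nuclearNorm singVal
  congr 1
  funext i
  rw [Function.comp_apply, Function.comp_apply, RCLike.ofReal_real_eq_id, id, Real.coe_sqrt,
    Real.coe_toNNReal', max_eq_left ((psd_tmul M).eigenvalues_nonneg i)]

lemma tmul_of_svd {m n r : ℕ} (U : Matrix (Fin m) (Fin r) ℝ) (V : Matrix (Fin n) (Fin r) ℝ)
    (d e : Fin r → ℝ) (hU : Uᵀ * U = 1) :
    (U * Matrix.diagonal d * Vᵀ)ᵀ * (U * Matrix.diagonal e * Vᵀ)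
      = V * Matrix.diagonal (fun i => d i * e i) * Vᵀ := by
  have : (U * Matrix.diagonal d * Vᵀ)ᵀ = V * Matrix.diagonal d * Uᵀ := by
    simp [Matrix.transpose_mul, Matrix.diagonal_transpose, Matrix.mul_assoc]
  rw [this]
  rw [show V * Matrix.diagonal d * Uᵀ * (U * Matrix.diagonal e * Vᵀ)
      = V * (Matrix.diagonal d * (Uᵀ * U) * Matrix.diagonal e) * Vᵀ by
    simp only [Matrix.mul_assoc]]
  rw [hU, Matrix.mul_one, Matrix.diagonal_mul_diagonal]

open scoped MatrixOrder in
lemma nuclearNorm_svd {m n r : ℕ} (U : Matrix (Fin m) (Fin r) ℝ) (V : Matrix (Fin n) (Fin r) ℝ)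
    (d : Fin r → ℝ) (hU : Uᵀ * U = 1) (hV : Vᵀ * V = 1) (hd : ∀ i, 0 ≤ d i) :
    nuclearNorm (U * Matrix.diagonal d * Vᵀ) = ∑ i, d i := by
  set D := U * Matrix.diagonal d * Vᵀ with hD
  set T : Matrix (Fin n) (Fin n) ℝ := V * Matrix.diagonal d * Vᵀ with hT
  have hTpsd : T.PosSemidef := by
    have : T = (V * Matrix.diagonal (fun i => Real.sqrt (d i)))
        * (V * Matrix.diagonal (fun i => Real.sqrt (d i)))ᵀ := by
      rw [Matrix.transpose_mul, Matrix.diagonal_transpose]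
      rw [show V * Matrix.diagonal (fun i => Real.sqrt (d i)) *
          (Matrix.diagonal (fun i => Real.sqrt (d i)) * Vᵀ)
          = V * (Matrix.diagonal (fun i => Real.sqrt (d i)) *
            Matrix.diagonal (fun i => Real.sqrt (d i))) * Vᵀ by simp only [Matrix.mul_assoc]]
      rw [Matrix.diagonal_mul_diagonal, hT]
      have : (fun i => Real.sqrt (d i) * Real.sqrt (d i)) = d := by
        funext i; exact Real.mul_self_sqrt (hd i)
      rw [this]
    rw [this, ← Matrix.conjTranspose_eq_transpose_of_trivial]
    exact Matrix.posSemidef_self_mul_conjTranspose _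
  have hsq : T ^ 2 = Dᵀ * D := by
    rw [hD, tmul_of_svd U V d d hU, pow_two, hT]
    rw [show V * Matrix.diagonal d * Vᵀ * (V * Matrix.diagonal d * Vᵀ)
        = V * (Matrix.diagonal d * (Vᵀ * V) * Matrix.diagonal d) * Vᵀ by
      simp only [Matrix.mul_assoc]]
    rw [hV, Matrix.mul_one, Matrix.diagonal_mul_diagonal]
  have hTeq : T = CFC.sqrt (Dᵀ * D) :=
    ((CFC.sqrt_eq_iff _ _ (psd_tmul D).nonneg hTpsd.nonneg).mpr (by rw [← sq]; exact hsq)).symm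
  rw [nuclearNorm_eq_trace_sqrt, ← hTeq, hT, Matrix.trace_mul_cycle, hV,
    Matrix.one_mul, Matrix.trace_diagonal]

lemma conj_diag_entry {a b : ℕ} (P : Matrix (Fin a) (Fin b) ℝ) (e : Fin a → ℝ) (i : Fin b) :
    (Pᵀ * Matrix.diagonal e * P) i i = ∑ k, e k * (P k i)^2 := by
  rw [Matrix.mul_assoc]
  simp [Matrix.mul_apply, Matrix.diagonal_apply, Finset.mul_sum, sq]
  congr 1; funext k; ring

lemma duality_bound {m n r : ℕ} (τ : ℝ) (hτ : 0 ≤ τ)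
    (U : Matrix (Fin m) (Fin r) ℝ) (V : Matrix (Fin n) (Fin r) ℝ) (c : Fin r → ℝ)
    (hU : Uᵀ * U = 1) (hV : Vᵀ * V = 1) (hc0 : ∀ i, 0 ≤ c i) (hcτ : ∀ i, c i ≤ τ)
    (L : Matrix (Fin m) (Fin n) ℝ) :
    Matrix.trace ((U * Matrix.diagonal c * Vᵀ)ᵀ * L) ≤ τ * nuclearNorm L := by
  set M := U * Matrix.diagonal c * Vᵀ with hM
  set hA := (show (Lᵀ * L).IsHermitian by simpa using Matrix.isHermitian_conjTranspose_mul_self L) with hhA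
  set W : Matrix (Fin n) (Fin n) ℝ := (hA.eigenvectorUnitary : Matrix (Fin n) (Fin n) ℝ) with hW
  have hWt : star W = Wᵀ := by
    rw [Matrix.star_eq_conjTranspose, Matrix.conjTranspose_eq_transpose_of_trivial]
  have hWW : Wᵀ * W = 1 := by rw [← hWt]; exact hA.eigenvectorUnitary.2.1
  have hWW' : W * Wᵀ = 1 := by rw [← hWt]; exact hA.eigenvectorUnitary.2.2
  -- trace identity
  have step1 : Matrix.trace (Mᵀ * L) = Matrix.trace ((M * W)ᵀ * (L * W)) := by
    have h : (M * W)ᵀ * (L * W) = Wᵀ * (Mᵀ * L) * W := by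
      rw [Matrix.transpose_mul]; simp only [Matrix.mul_assoc]
    rw [h, Matrix.trace_mul_cycle, ← Matrix.mul_assoc, hWW', Matrix.one_mul]
  -- column norms of L * W
  have step3 : ∀ i, ∑ j, (L * W) j i ^ 2 = hA.eigenvalues i := by
    intro i
    rw [← mul_self_diag]
    have : (L * W)ᵀ * (L * W) = star W * (Lᴴ * L) * W := by
      rw [hWt, Matrix.conjTranspose_eq_transpose_of_trivial, Matrix.transpose_mul]
      simp only [Matrix.mul_assoc]
    have hdg : star W * (Lᴴ * L) * W = diagonal (RCLike.ofReal ∘ hA.eigenvalues) := by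
      have h := hA.conjStarAlgAut_star_eigenvectorUnitary
      rw [Unitary.conjStarAlgAut_apply, Unitary.coe_star, star_star] at h
      rw [Matrix.conjTranspose_eq_transpose_of_trivial]; exact h
    rw [this, hdg]
    simp [Matrix.diagonal_apply_eq]
  -- column norms of M * W
  have step4 : ∀ i, ∑ j, (M * W) j i ^ 2 ≤ τ ^ 2 := by
    intro i
    rw [← mul_self_diag]
    have hMM : (M * W)ᵀ * (M * W) = (Vᵀ * W)ᵀ * Matrix.diagonal (fun k => c k * c k) * (Vᵀ * W) := by
      rw [Matrix.transpose_mul, hM]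
      rw [show Wᵀ * (U * Matrix.diagonal c * Vᵀ)ᵀ * (U * Matrix.diagonal c * Vᵀ * W)
          = Wᵀ * ((U * Matrix.diagonal c * Vᵀ)ᵀ * (U * Matrix.diagonal c * Vᵀ)) * W by
        simp only [Matrix.mul_assoc]]
      rw [tmul_of_svd U V c c hU, Matrix.transpose_mul, Matrix.transpose_transpose]
      simp only [Matrix.mul_assoc]
    rw [hMM, conj_diag_entry]
    have h1 : ∑ k, (c k * c k) * ((Vᵀ * W) k i)^2 ≤ ∑ k, τ^2 * ((Vᵀ * W) k i)^2 := by
      apply Finset.sum_le_sum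
      intro k _
      apply mul_le_mul_of_nonneg_right _ (sq_nonneg _)
      calc c k * c k ≤ τ * τ := mul_le_mul (hcτ k) (hcτ k) (hc0 k) hτ
        _ = τ ^ 2 := (sq τ).symm
    refine h1.trans ?_
    rw [← Finset.mul_sum]
    have h2 : ∑ k, ((Vᵀ * W) k i)^2 ≤ 1 := by
      rw [← mul_self_diag]
      have hPP : (Vᵀ * W)ᵀ * (Vᵀ * W) = Wᵀ * (V * Vᵀ) * W := by
        rw [Matrix.transpose_mul, Matrix.transpose_transpose]
        simp only [Matrix.mul_assoc]
      have key : (Wᵀ * W) i i - (Wᵀ * (V * Vᵀ) * W) i i = ∑ j, ((((1 : Matrix (Fin n) (Fin n) ℝ) - V * Vᵀ)) * W) j i ^ 2 := by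
        rw [← mul_self_diag]
        have hNN : ((((1 : Matrix (Fin n) (Fin n) ℝ) - V * Vᵀ)) * W)ᵀ * ((((1 : Matrix (Fin n) (Fin n) ℝ) - V * Vᵀ)) * W)
            = Wᵀ * W - Wᵀ * (V * Vᵀ) * W := by
          have hNt : (((1 : Matrix (Fin n) (Fin n) ℝ) - V * Vᵀ))ᵀ = ((1 : Matrix (Fin n) (Fin n) ℝ) - V * Vᵀ) := by
            rw [Matrix.transpose_sub, Matrix.transpose_one, Matrix.transpose_mul,
              Matrix.transpose_transpose]
          have hNsq : (((1 : Matrix (Fin n) (Fin n) ℝ) - V * Vᵀ)) * (((1 : Matrix (Fin n) (Fin n) ℝ) - V * Vᵀ)) = ((1 : Matrix (Fin n) (Fin n) ℝ) - V * Vᵀ) := by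
            have hPidem : V * Vᵀ * (V * Vᵀ) = V * Vᵀ := by
              rw [show V * Vᵀ * (V * Vᵀ) = V * (Vᵀ * V) * Vᵀ by simp only [Matrix.mul_assoc],
                hV, Matrix.mul_one]
            rw [Matrix.sub_mul, Matrix.mul_sub, Matrix.mul_sub, Matrix.one_mul, Matrix.mul_one,
              hPidem]
            simp only [Matrix.one_mul]
            abel
          rw [Matrix.transpose_mul, hNt,
            show Wᵀ * ((((1 : Matrix (Fin n) (Fin n) ℝ) - V * Vᵀ))) * ((((1 : Matrix (Fin n) (Fin n) ℝ) - V * Vᵀ)) * W) = Wᵀ * ((((1 : Matrix (Fin n) (Fin n) ℝ) - V * Vᵀ)) * (((1 : Matrix (Fin n) (Fin n) ℝ) - V * Vᵀ))) * W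
              by simp only [Matrix.mul_assoc],
            hNsq, Matrix.mul_sub, Matrix.sub_mul, Matrix.mul_one]
          try simp only [Matrix.mul_assoc]
        rw [hNN]
        simp [Matrix.sub_apply]
      have hsum : 0 ≤ ∑ j, ((((1 : Matrix (Fin n) (Fin n) ℝ) - V * Vᵀ)) * W) j i ^ 2 :=
        Finset.sum_nonneg fun j _ => sq_nonneg _
      rw [hPP]
      have hWii : (Wᵀ * W) i i = 1 := by rw [hWW]; simp
      linarith [key ▸ hsum, hWii]
    calc τ^2 * ∑ k, ((Vᵀ * W) k i)^2 ≤ τ^2 * 1 := by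
          exact mul_le_mul_of_nonneg_left h2 (sq_nonneg τ)
      _ = τ^2 := mul_one _
  -- combine
  rw [step1, trace_transpose_mul_eq]
  have hbound : ∀ i : Fin n, ∑ j, (M * W) j i * (L * W) j i ≤ τ * singVal L i := by
    intro i
    have hcs := Finset.sum_mul_sq_le_sq_mul_sq Finset.univ (fun j => (M * W) j i) (fun j => (L * W) j i)
    have h1 : ∑ j, (M * W) j i * (L * W) j i
        ≤ Real.sqrt ((∑ j, (M * W) j i ^ 2) * (∑ j, (L * W) j i ^ 2)) := by
      calc ∑ j, (M * W) j i * (L * W) j i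
          ≤ |∑ j, (M * W) j i * (L * W) j i| := le_abs_self _
        _ = Real.sqrt ((∑ j, (M * W) j i * (L * W) j i)^2) := (Real.sqrt_sq_eq_abs _).symm
        _ ≤ Real.sqrt ((∑ j, (M * W) j i ^ 2) * (∑ j, (L * W) j i ^ 2)) :=
            Real.sqrt_le_sqrt hcs
    refine h1.trans ?_
    rw [Real.sqrt_mul (by positivity), step3 i]
    have h2 : Real.sqrt (∑ j, (M * W) j i ^ 2) ≤ τ := by
      rw [show τ = Real.sqrt (τ^2) by rw [Real.sqrt_sq hτ]]
      exact Real.sqrt_le_sqrt (step4 i)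
    apply mul_le_mul_of_nonneg_right h2 (Real.sqrt_nonneg _) |>.trans
    rw [singVal]
  calc ∑ i, ∑ j, (M * W) j i * (L * W) j i ≤ ∑ i, τ * singVal L i :=
        Finset.sum_le_sum fun i _ => hbound i
    _ = τ * nuclearNorm L := by rw [nuclearNorm, Finset.mul_sum]

lemma trace_expand {a b : ℕ} (X Y : Matrix (Fin a) (Fin b) ℝ) :
    Matrix.trace ((X + Y)ᵀ * (X + Y))
      = Matrix.trace (Xᵀ * X) + 2 * Matrix.trace (Xᵀ * Y) + Matrix.trace (Yᵀ * Y) := by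
  rw [Matrix.transpose_add, Matrix.add_mul, Matrix.mul_add, Matrix.mul_add,
    Matrix.trace_add, Matrix.trace_add, Matrix.trace_add, trace_transpose_mul_comm Y X]
  ring

/-- For τ > 0, the SVT operator D_τ(Q) = U(Σ-τI)₊Vᵀ is the unique
minimizer of L ↦ τ‖L‖_* + (1/2)‖L - Q‖_F². -/
theorem svt_unique_minimizer {m n r : ℕ} (τ : ℝ) (hτ : 0 < τ)
    (Q : Matrix (Fin m) (Fin n) ℝ)
    (U : Matrix (Fin m) (Fin r) ℝ) (V : Matrix (Fin n) (Fin r) ℝ) (σ : Fin r → ℝ)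
    (hU : Uᵀ * U = 1) (hV : Vᵀ * V = 1) (hσ : ∀ i, 0 ≤ σ i)
    (hQ : Q = U * Matrix.diagonal σ * Vᵀ)
    (D : Matrix (Fin m) (Fin n) ℝ)
    (hD : D = U * Matrix.diagonal (fun i => max (σ i - τ) 0) * Vᵀ) :
    (∀ L : Matrix (Fin m) (Fin n) ℝ,
      τ * nuclearNorm D + (1/2) * (frobNorm (D - Q))^2
        ≤ τ * nuclearNorm L + (1/2) * (frobNorm (L - Q))^2) ∧
    (∀ L : Matrix (Fin m) (Fin n) ℝ,
      τ * nuclearNorm L + (1/2) * (frobNorm (L - Q))^2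
        = τ * nuclearNorm D + (1/2) * (frobNorm (D - Q))^2 → L = D) := by
  set d : Fin r → ℝ := fun i => max (σ i - τ) 0 with hd
  set c : Fin r → ℝ := fun i => σ i - d i with hc
  have hd0 : ∀ i, 0 ≤ d i := fun i => le_max_right _ _
  have hc0 : ∀ i, 0 ≤ c i := by
    intro i
    rcases le_total (σ i - τ) 0 with h | h
    · simp only [hc, hd, max_eq_right h, sub_zero]; exact hσ i
    · simp only [hc, hd, max_eq_left h]; linarith
  have hcτ : ∀ i, c i ≤ τ := by
    intro i
    rcases le_total (σ i - τ) 0 with h | h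
    · simp only [hc, hd, max_eq_right h, sub_zero]; linarith
    · simp only [hc, hd, max_eq_left h]; linarith
  have hcd : ∀ i, c i * d i = τ * d i := by
    intro i
    rcases le_total (σ i - τ) 0 with h | h
    · simp only [hc, hd, max_eq_right h, mul_zero]
    · simp only [hc, hd, max_eq_left h]; ring
  have hM : Q - D = U * Matrix.diagonal c * Vᵀ := by
    rw [hQ, hD, ← Matrix.sub_mul, ← Matrix.mul_sub, ← Matrix.diagonal_sub]
  have hND : nuclearNorm D = ∑ i, d i := by
    rw [hD]; exact nuclearNorm_svd U V d hU hV hd0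
  have hMD : Matrix.trace ((Q - D)ᵀ * D) = τ * ∑ i, d i := by
    rw [hM, hD, tmul_of_svd U V c d hU, Matrix.trace_mul_cycle, hV, Matrix.one_mul,
      Matrix.trace_diagonal]
    rw [show ∑ i, c i * d i = ∑ i, τ * d i from Finset.sum_congr rfl fun i _ => hcd i,
      ← Finset.mul_sum]
  have hdual : ∀ L : Matrix (Fin m) (Fin n) ℝ, Matrix.trace ((Q - D)ᵀ * L) ≤ τ * nuclearNorm L := by
    intro L
    rw [hM]
    exact duality_bound τ hτ.le U V c hU hV hc0 hcτ L
  have hid : ∀ L : Matrix (Fin m) (Fin n) ℝ,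
      (τ * nuclearNorm L + (1/2) * (frobNorm (L - Q))^2)
        - (τ * nuclearNorm D + (1/2) * (frobNorm (D - Q))^2)
      = (τ * nuclearNorm L - Matrix.trace ((Q - D)ᵀ * L))
        + (1/2) * Matrix.trace ((L - D)ᵀ * (L - D)) := by
    intro L
    have e1 : L - Q = (L - D) + (D - Q) := by abel
    have e2 : Matrix.trace ((L - D)ᵀ * (D - Q))
        = τ * (∑ i, d i) - Matrix.trace ((Q - D)ᵀ * L) := by
      have hneg : D - Q = -(Q - D) := by abel
      rw [hneg, Matrix.mul_neg, Matrix.trace_neg, trace_transpose_mul_comm]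
      rw [show (Q - D)ᵀ * (L - D) = (Q - D)ᵀ * L - (Q - D)ᵀ * D from Matrix.mul_sub _ _ _,
        Matrix.trace_sub, hMD]
      ring
    have e3 : (frobNorm (D - Q))^2 = Matrix.trace ((D - Q)ᵀ * (D - Q)) := frob_sq _
    have e4 : (frobNorm (L - Q))^2
        = Matrix.trace ((L - D)ᵀ * (L - D)) + 2 * Matrix.trace ((L - D)ᵀ * (D - Q))
          + Matrix.trace ((D - Q)ᵀ * (D - Q)) := by
      rw [frob_sq, e1, trace_expand]
    rw [e3, e4, e2, hND]
    ring
  constructor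
  · intro L
    have h1 := hid L
    have h2 := hdual L
    have h3 := trace_tmul_nonneg (L - D)
    linarith
  · intro L heq
    have h1 := hid L
    have h2 := hdual L
    have h3 := trace_tmul_nonneg (L - D)
    have hz : Matrix.trace ((L - D)ᵀ * (L - D)) = 0 := by
      rw [heq] at h1; linarith
    rw [trace_transpose_mul_eq] at hz
    have hE : ∀ i, ∀ j, (L - D) j i * (L - D) j i = 0 := by
      intro i j
      have houter := (Finset.sum_eq_zero_iff_of_nonneg
        (fun i _ => Finset.sum_nonneg fun j _ => mul_self_nonneg ((L - D) j i))).mp hz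
      have hinner := (Finset.sum_eq_zero_iff_of_nonneg
        (fun j _ => mul_self_nonneg ((L - D) j i))).mp (houter i (Finset.mem_univ i))
      exact hinner j (Finset.mem_univ j)
    have : L - D = 0 := by
      ext j i
      exact mul_self_eq_zero.mp (hE i j)
    exact sub_eq_zero.mp this
end

section
/- Let Γ be an m × n real matrix with SVD split Γ = U₀Σ₀V₀ᵀ + U₁Σ₁V₁ᵀ where the diagonal entries of Σ₀ exceed τ > 0 and those of Σ₁ are at most τ. Set L* = U₀(Σ₀ - τI)V₀ᵀ and W = τ⁻¹U₁Σ₁V₁ᵀ. Then Γ - L* = τ(U₀V₀ᵀ + W), with U₀ᵀW = 0, WV₀ = 0, and ‖W‖₂ ≤ 1. -/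
open Matrix BigOperators

section Aux

lemma proj_quad_le {n r : ℕ} (V : Matrix (Fin n) (Fin r) ℝ) (hV : Vᵀ * V = 1)
    (x : Fin n → ℝ) : (Vᵀ *ᵥ x) ⬝ᵥ (Vᵀ *ᵥ x) ≤ x ⬝ᵥ x := by
  set P : Matrix (Fin n) (Fin n) ℝ := V * Vᵀ with hP
  have hPsymm : Pᵀ = P := by simp [hP, Matrix.transpose_mul]
  have hPP : P * P = P := by
    rw [hP, Matrix.mul_assoc, ← Matrix.mul_assoc Vᵀ, hV, Matrix.one_mul]
  have hy : (Vᵀ *ᵥ x) ⬝ᵥ (Vᵀ *ᵥ x) = x ⬝ᵥ (P *ᵥ x) := by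
    rw [hP, ← Matrix.mulVec_mulVec, Matrix.dotProduct_mulVec, ← Matrix.mulVec_transpose,
      Matrix.transpose_transpose]
    exact dotProduct_comm _ _
  have hPx : (P *ᵥ x) ⬝ᵥ (P *ᵥ x) = x ⬝ᵥ (P *ᵥ x) := by
    rw [Matrix.dotProduct_mulVec, ← Matrix.mulVec_transpose, Matrix.mulVec_mulVec,
      hPsymm, hPP]
    exact dotProduct_comm _ _
  have hnonneg : 0 ≤ (x - P *ᵥ x) ⬝ᵥ (x - P *ᵥ x) :=
    Finset.sum_nonneg fun i _ => mul_self_nonneg _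
  have hcomm : (P *ᵥ x) ⬝ᵥ x = x ⬝ᵥ (P *ᵥ x) := dotProduct_comm _ _
  rw [hy]
  nlinarith [hnonneg, sub_dotProduct x (P *ᵥ x) (x - P *ᵥ x),
    dotProduct_sub x x (P *ᵥ x), dotProduct_sub (P *ᵥ x) x (P *ᵥ x)]

lemma key_quad {m n r1 : ℕ} (τ : ℝ) (hτ : 0 < τ)
    (U1 : Matrix (Fin m) (Fin r1) ℝ) (V1 : Matrix (Fin n) (Fin r1) ℝ) (σ1 : Fin r1 → ℝ)
    (hU1 : U1ᵀ * U1 = 1) (hV1 : V1ᵀ * V1 = 1)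
    (hσ1 : ∀ j, 0 ≤ σ1 j ∧ σ1 j ≤ τ)
    (W : Matrix (Fin m) (Fin n) ℝ)
    (hWdef : W = τ⁻¹ • (U1 * Matrix.diagonal σ1 * V1ᵀ)) (x : Fin n → ℝ) :
    (W *ᵥ x) ⬝ᵥ (W *ᵥ x) ≤ x ⬝ᵥ x := by
  have hWtW : Wᵀ * W = (τ⁻¹ * τ⁻¹) • (V1 * Matrix.diagonal (fun j => σ1 j * σ1 j) * V1ᵀ) := by
    rw [hWdef]
    rw [Matrix.transpose_smul, Matrix.smul_mul, Matrix.mul_smul, smul_smul]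
    congr 1
    simp only [Matrix.transpose_mul, Matrix.transpose_transpose, Matrix.diagonal_transpose,
      Matrix.mul_assoc]
    rw [← Matrix.mul_assoc U1ᵀ, hU1, Matrix.one_mul, ← Matrix.mul_assoc (Matrix.diagonal σ1),
      Matrix.diagonal_mul_diagonal]
  have h1 : x ⬝ᵥ ((Wᵀ * W) *ᵥ x) = (W *ᵥ x) ⬝ᵥ (W *ᵥ x) := by
    rw [← Matrix.mulVec_mulVec, Matrix.dotProduct_mulVec, ← Matrix.mulVec_transpose,
      Matrix.transpose_transpose]
  set y : Fin r1 → ℝ := V1ᵀ *ᵥ x with hy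
  have h2 : x ⬝ᵥ ((V1 * Matrix.diagonal (fun j => σ1 j * σ1 j) * V1ᵀ) *ᵥ x)
      = y ⬝ᵥ (Matrix.diagonal (fun j => σ1 j * σ1 j) *ᵥ y) := by
    rw [← Matrix.mulVec_mulVec, ← Matrix.mulVec_mulVec, Matrix.dotProduct_mulVec,
      ← Matrix.mulVec_transpose, hy]
  have h3 : y ⬝ᵥ (Matrix.diagonal (fun j => σ1 j * σ1 j) *ᵥ y) ≤ (τ * τ) * (y ⬝ᵥ y) := by
    simp only [dotProduct, Matrix.mulVec_diagonal, Finset.mul_sum]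
    apply Finset.sum_le_sum
    intro j _
    have h0 := (hσ1 j).1
    have hle := (hσ1 j).2
    nlinarith [mul_self_nonneg (y j), mul_le_mul hle hle h0 hτ.le]
  have h4 : y ⬝ᵥ y ≤ x ⬝ᵥ x := proj_quad_le V1 hV1 x
  rw [← h1, hWtW, Matrix.smul_mulVec, dotProduct_smul, smul_eq_mul, h2]
  have h5 : τ⁻¹ * τ⁻¹ * (y ⬝ᵥ (Matrix.diagonal (fun j => σ1 j * σ1 j) *ᵥ y))
      ≤ τ⁻¹ * τ⁻¹ * ((τ * τ) * (y ⬝ᵥ y)) :=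
    mul_le_mul_of_nonneg_left h3 (by positivity)
  refine h5.trans ?_
  rw [show τ⁻¹ * τ⁻¹ * (τ * τ * (y ⬝ᵥ y)) = (τ⁻¹ * τ) * (τ⁻¹ * τ) * (y ⬝ᵥ y) by ring,
    inv_mul_cancel₀ hτ.ne']
  simpa using h4

end Aux

/-- With L* = U₀(Σ₀-τI)V₀ᵀ and W = τ⁻¹U₁Σ₁V₁ᵀ we have
Γ - L* = τ(U₀V₀ᵀ + W), U₀ᵀW = 0, WV₀ = 0, ‖W‖₂ ≤ 1. -/
theorem svt_optimality_decomposition {m n r0 r1 : ℕ} (τ : ℝ) (hτ : 0 < τ)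
    (Γ : Matrix (Fin m) (Fin n) ℝ)
    (U0 : Matrix (Fin m) (Fin r0) ℝ) (V0 : Matrix (Fin n) (Fin r0) ℝ) (σ0 : Fin r0 → ℝ)
    (U1 : Matrix (Fin m) (Fin r1) ℝ) (V1 : Matrix (Fin n) (Fin r1) ℝ) (σ1 : Fin r1 → ℝ)
    (hU0 : U0ᵀ * U0 = 1) (hV0 : V0ᵀ * V0 = 1)
    (hU1 : U1ᵀ * U1 = 1) (hV1 : V1ᵀ * V1 = 1)
    (hU01 : U0ᵀ * U1 = 0) (hV01 : V0ᵀ * V1 = 0)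
    (hσ0 : ∀ j, τ < σ0 j) (hσ1 : ∀ j, 0 ≤ σ1 j ∧ σ1 j ≤ τ)
    (hΓ : Γ = U0 * Matrix.diagonal σ0 * V0ᵀ + U1 * Matrix.diagonal σ1 * V1ᵀ)
    (Lstar W : Matrix (Fin m) (Fin n) ℝ)
    (hL : Lstar = U0 * Matrix.diagonal (fun j => σ0 j - τ) * V0ᵀ)
    (hWdef : W = τ⁻¹ • (U1 * Matrix.diagonal σ1 * V1ᵀ)) :
    Γ - Lstar = τ • (U0 * V0ᵀ + W)
      ∧ U0ᵀ * W = 0 ∧ W * V0 = 0 ∧ opNorm W ≤ 1 := by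
  refine ⟨?_, ?_, ?_, ?_⟩
  · have hdiag : Matrix.diagonal σ0 - Matrix.diagonal (fun j => σ0 j - τ)
        = (τ : ℝ) • (1 : Matrix (Fin r0) (Fin r0) ℝ) := by
      ext i j
      by_cases h : i = j <;>
        simp [Matrix.diagonal_apply, Matrix.one_apply, h]
    have hmain : U0 * Matrix.diagonal σ0 * V0ᵀ
        - U0 * Matrix.diagonal (fun j => σ0 j - τ) * V0ᵀ = τ • (U0 * V0ᵀ) := by
      rw [← Matrix.sub_mul, ← Matrix.mul_sub, hdiag, Matrix.mul_smul, Matrix.mul_one,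
        Matrix.smul_mul]
    rw [hΓ, hL, hWdef, smul_add, smul_smul, mul_inv_cancel₀ hτ.ne', one_smul, ← hmain]
    abel
  · rw [hWdef, Matrix.mul_smul]
    simp only [← Matrix.mul_assoc]
    rw [hU01, Matrix.zero_mul, Matrix.zero_mul, smul_zero]
  · have h10 : V1ᵀ * V0 = 0 := by
      have := congrArg Matrix.transpose hV01
      simpa using this
    rw [hWdef, Matrix.smul_mul]
    simp only [Matrix.mul_assoc]
    rw [h10, Matrix.mul_zero, Matrix.mul_zero, smul_zero]
  · unfold opNorm
    apply ContinuousLinearMap.opNorm_le_bound _ zero_le_one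
    intro x
    rw [one_mul, LinearMap.coe_toContinuousLinearMap']
    have key := key_quad τ hτ U1 V1 σ1 hU1 hV1 hσ1 W hWdef ((WithLp.equiv 2 _) x)
    rw [EuclideanSpace.norm_eq, EuclideanSpace.norm_eq]
    apply Real.sqrt_le_sqrt
    simpa [dotProduct, Real.norm_eq_abs, sq_abs, pow_two] using key
end
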